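/- (Theorem 3, Case 1.) Let Ξ > 0, q_c > 0 and q_max > 0. Define F_EE(q) = ln(1 + qΞ) / ((q + q_c)·ln 2) and F̂_EE(q) = ((q + q_c)/(1 + qΞ))·Ξ − ln(1 + qΞ) for q ≥ 0. If F̂_EE(q_max) ≥ 0, then F_EE is monotonically increasing on [0, q_max]; in particular, F_EE(q) ≤ F_EE(q_max) for every q ∈ [0, q_max], so the transmit power spectral density q* = q_max maximizes the energy efficiency subject to 0 < q ≤ q_max. -/

import Mathlib

open Real

/-- Energy efficiency `F_EE(q) = ln(1 + qΞ) / ((q + q_c)·ln 2)`. -/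
noncomputable def FEE (Ξ q_c q : ℝ) : ℝ :=
  Real.log (1 + q * Ξ) / ((q + q_c) * Real.log 2)

/-- Auxiliary function `F̂_EE(q) = ((q + q_c)/(1 + qΞ))·Ξ − ln(1 + qΞ)`. -/
noncomputable def FhatEE (Ξ q_c q : ℝ) : ℝ :=
  (q + q_c) / (1 + q * Ξ) * Ξ - Real.log (1 + q * Ξ)

lemma one_add_pos {Ξ q : ℝ} (hΞ : 0 < Ξ) (hq : 0 ≤ q) : 0 < 1 + q * Ξ := by positivity

lemma hasDerivAt_FhatEE {Ξ q_c q : ℝ} (hΞ : 0 < Ξ) (hq : 0 ≤ q) :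
    HasDerivAt (FhatEE Ξ q_c) (-(Ξ^2 * (q + q_c)) / (1 + q * Ξ)^2) q := by
  have hd : (0:ℝ) < 1 + q * Ξ := one_add_pos hΞ hq
  have h1 : HasDerivAt (fun x : ℝ => 1 + x * Ξ) Ξ q := by
    simpa using ((hasDerivAt_id q).mul_const Ξ).const_add 1
  have h2 : HasDerivAt (fun x : ℝ => x + q_c) 1 q := (hasDerivAt_id q).add_const q_c
  have h3 : HasDerivAt (fun x : ℝ => (x + q_c) / (1 + x * Ξ))
      ((1 * (1 + q * Ξ) - (q + q_c) * Ξ) / (1 + q * Ξ)^2) q := h2.div h1 hd.ne'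
  have h4 := (h3.mul_const Ξ).sub (h1.log hd.ne')
  refine h4.congr_deriv ?_
  field_simp
  ring

lemma hasDerivAt_FEE {Ξ q_c q : ℝ} (hΞ : 0 < Ξ) (hq : 0 ≤ q) (hqc : 0 < q_c) :
    HasDerivAt (FEE Ξ q_c) (FhatEE Ξ q_c q / ((q + q_c)^2 * Real.log 2)) q := by
  have hd : (0:ℝ) < 1 + q * Ξ := one_add_pos hΞ hq
  have hden : (0:ℝ) < q + q_c := by linarith
  have hl2 : (0:ℝ) < Real.log 2 := Real.log_pos (by norm_num)
  have h1 : HasDerivAt (fun x : ℝ => 1 + x * Ξ) Ξ q := by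
    simpa using ((hasDerivAt_id q).mul_const Ξ).const_add 1
  have h2 : HasDerivAt (fun x : ℝ => Real.log (1 + x * Ξ)) (Ξ / (1 + q * Ξ)) q := by
    simpa [div_eq_mul_inv, mul_comm] using h1.log hd.ne'
  have h3 : HasDerivAt (fun x : ℝ => (x + q_c) * Real.log 2) (Real.log 2) q := by
    simpa using ((hasDerivAt_id q).add_const q_c).mul_const (Real.log 2)
  have hne : (q + q_c) * Real.log 2 ≠ 0 := by positivity
  have h4 := h2.div h3 hne
  refine h4.congr_deriv ?_
  unfold FhatEE
  field_simp

/-- Theorem 3, Case 1: if `F̂_EE(q_max) ≥ 0`, then the energy efficiency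
`F_EE` is monotonically increasing on `[0, q_max]`; in particular `F_EE(q) ≤ F_EE(q_max)`
for every `q ∈ [0, q_max]`, so `q* = q_max` maximizes the energy efficiency subject to
`0 < q ≤ q_max`. -/
theorem FEE_monotone_of_FhatEE_nonneg (Ξ q_c q_max : ℝ) (hΞ : 0 < Ξ) (hqc : 0 < q_c)
    (hqm : 0 < q_max) (h : 0 ≤ FhatEE Ξ q_c q_max) :
    MonotoneOn (FEE Ξ q_c) (Set.Icc 0 q_max) ∧
      ∀ q ∈ Set.Icc (0 : ℝ) q_max, FEE Ξ q_c q ≤ FEE Ξ q_c q_max := by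
  have hl2 : (0:ℝ) < Real.log 2 := Real.log_pos (by norm_num)
  have hanti : AntitoneOn (FhatEE Ξ q_c) (Set.Icc 0 q_max) := by
    apply antitoneOn_of_deriv_nonpos (convex_Icc _ _)
    · exact fun x hx => (hasDerivAt_FhatEE hΞ hx.1).continuousAt.continuousWithinAt
    · intro x hx
      rw [interior_Icc] at hx
      exact (hasDerivAt_FhatEE hΞ hx.1.le).differentiableAt.differentiableWithinAt
    · intro x hx
      rw [interior_Icc] at hx
      rw [(hasDerivAt_FhatEE hΞ hx.1.le).deriv]
      have h1 : (0:ℝ) < 1 + x * Ξ := one_add_pos hΞ hx.1.le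
      have h2 : (0:ℝ) < x + q_c := by linarith [hx.1]
      apply div_nonpos_of_nonpos_of_nonneg
      · nlinarith
      · positivity
  have hhat : ∀ q ∈ Set.Icc (0:ℝ) q_max, 0 ≤ FhatEE Ξ q_c q := by
    intro q hq
    have := hanti hq (Set.right_mem_Icc.mpr hqm.le) hq.2
    linarith
  have hmono : MonotoneOn (FEE Ξ q_c) (Set.Icc 0 q_max) := by
    apply monotoneOn_of_deriv_nonneg (convex_Icc _ _)
    · exact fun x hx => (hasDerivAt_FEE hΞ hx.1 hqc).continuousAt.continuousWithinAt
    · intro x hx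
      rw [interior_Icc] at hx
      exact (hasDerivAt_FEE hΞ hx.1.le hqc).differentiableAt.differentiableWithinAt
    · intro x hx
      rw [interior_Icc] at hx
      rw [(hasDerivAt_FEE hΞ hx.1.le hqc).deriv]
      have h2 : (0:ℝ) < x + q_c := by linarith [hx.1]
      apply div_nonneg (hhat x ⟨hx.1.le, hx.2.le⟩)
      positivity
  exact ⟨hmono, fun q hq => hmono hq (Set.right_mem_Icc.mpr hqm.le) hq.2⟩
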